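/- In the Gaussian thresholding model, the OLS thresholding estimator converges almost surely to β₁ᵐ · γ, where γ = π(ω − E[p̂])/(E[p̂](1 − E[p̂])), with E[p̂] = ζ(1−π) + ωπ, ω = Φ(β₁ᵍ + β₀ᵍ − c), ζ = Φ(β₀ᵍ − c). -/

import Mathlib

open MeasureTheory ProbabilityTheory Filter

/-- Standard normal CDF. -/
noncomputable def Phi (x : ℝ) : ℝ := ((gaussianReal 0 1) (Set.Iic x)).toReal





lemma gauss_map_neg : (gaussianReal 0 1).map (fun x => -x) = gaussianReal 0 1 := by
  have h := gaussianReal_map_const_mul (μ := 0) (v := 1) (-1)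
  have h2 : (NNReal.mk ((-1:ℝ)^2) (sq_nonneg _)) * 1 = 1 := by
    ext; norm_num
  rw [h2] at h
  simpa [neg_one_mul] using h

lemma gauss_Ici (t : ℝ) : (gaussianReal 0 1) (Set.Ici t) = (gaussianReal 0 1) (Set.Iic (-t)) := by
  conv_lhs => rw [← gauss_map_neg]
  rw [Measure.map_apply measurable_neg measurableSet_Ici]
  congr 1
  ext x
  simp [le_neg]

lemma gauss_Iic_pos (t : ℝ) : 0 < (gaussianReal 0 1) (Set.Iic t) := by
  rw [gaussianReal_of_var_ne_zero _ one_ne_zero, withDensity_apply _ measurableSet_Iic]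
  rw [pos_iff_ne_zero]
  intro h
  have := lintegral_pos_iff_support (μ := volume.restrict (Set.Iic t)) (measurable_gaussianPDF 0 1)
  rw [h] at this
  have h2 : Function.support (gaussianPDF 0 1) = Set.univ := by
    ext x
    simp [Function.mem_support, (gaussianPDF_pos 0 one_ne_zero x).ne']
  simp only [h2] at this
  have h3 : (0:ENNReal) < volume.restrict (Set.Iic t) Set.univ := by
    rw [Measure.restrict_apply_univ]
    simp [Real.volume_Iic]
  exact absurd (this.mpr h3) (lt_irrefl 0)

lemma gauss_Ioi_pos (t : ℝ) : 0 < (gaussianReal 0 1) (Set.Ioi t) := by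
  calc (0:ENNReal) < (gaussianReal 0 1) (Set.Ici (t+1)) := by
        rw [gauss_Ici]; exact gauss_Iic_pos _
  _ ≤ _ := measure_mono (fun x hx => lt_of_lt_of_le (show t < t + 1 by linarith) hx)

lemma Phi_pos (t : ℝ) : 0 < Phi t :=
  ENNReal.toReal_pos (gauss_Iic_pos t).ne' (measure_ne_top _ _)

lemma Phi_lt_one (t : ℝ) : Phi t < 1 := by
  have hlt : (gaussianReal 0 1) (Set.Iic t) < 1 := by
    calc (gaussianReal 0 1) (Set.Iic t)
        < (gaussianReal 0 1) (Set.Iic t) + (gaussianReal 0 1) (Set.Iic t)ᶜ :=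
          ENNReal.lt_add_right (measure_ne_top _ _)
            (by rw [Set.compl_Iic]; exact (gauss_Ioi_pos t).ne')
    _ = 1 := (measure_add_measure_compl measurableSet_Iic).trans measure_univ
  calc Phi t < (1:ENNReal).toReal :=
        (ENNReal.toReal_lt_toReal (measure_ne_top _ _) ENNReal.one_ne_top).mpr hlt
  _ = 1 := by simp

lemma Phi_mono : Monotone Phi := fun _ _ hab =>
  (ENNReal.toReal_le_toReal (measure_ne_top _ _) (measure_ne_top _ _)).mpr
    (measure_mono (Set.Iic_subset_Iic.mpr hab))



lemma integrable_id_gauss : Integrable (fun x : ℝ => x) (gaussianReal 0 1) := by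
  rw [gaussianReal_of_var_ne_zero _ one_ne_zero,
    integrable_withDensity_iff (measurable_gaussianPDF _ _)
      (ae_of_all _ fun x => ENNReal.ofReal_lt_top)]
  have base : Integrable (fun x : ℝ => x * Real.exp (-(1/2) * x^2)) volume := by
    have := integrable_rpow_mul_exp_neg_mul_sq (b := 1/2) (by norm_num) (s := 1) (by norm_num)
    simpa [Real.rpow_one] using this
  have : (fun x : ℝ => x * ((gaussianPDF 0 1 x).toReal))
      = fun x => (Real.sqrt (2 * Real.pi))⁻¹ * (x * Real.exp (-(1/2) * x^2)) := by
    funext x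
    rw [gaussianPDF, ENNReal.toReal_ofReal (gaussianPDFReal_nonneg _ _ _), gaussianPDFReal]
    have : -(x - 0)^2 / (2 * (1:NNReal)) = -(1/2) * x^2 := by push_cast; ring
    rw [this]
    push_cast
    ring
  rw [this]
  exact base.const_mul _

lemma integral_id_gauss : ∫ x, x ∂(gaussianReal 0 1) = 0 := by
  have h : (gaussianReal 0 1).map (fun x => -x) = gaussianReal 0 1 := gauss_map_neg
  have h2 : ∫ x, x ∂(gaussianReal 0 1) = ∫ x, -x ∂(gaussianReal 0 1) := by
    conv_lhs => rw [← h]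
    rw [integral_map (φ := fun x : ℝ => -x) measurable_neg.aemeasurable
      (f := fun x : ℝ => x) measurable_id.aestronglyMeasurable]
  rw [integral_neg] at h2
  linarith

lemma integral_indicator_gauss (t : ℝ) :
    ∫ x, (if t ≤ x then (1:ℝ) else 0) ∂(gaussianReal 0 1) = Phi (-t) := by
  have h : (fun x : ℝ => if t ≤ x then (1:ℝ) else 0) = (Set.Ici t).indicator 1 := by
    funext x; simp [Set.indicator_apply]
  rw [h, integral_indicator_one measurableSet_Ici]
  have : (gaussianReal 0 1) (Set.Ici t) = (gaussianReal 0 1) (Set.Iic (-t)) := gauss_Ici t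
  rw [measureReal_def, this]; rfl




lemma integrable_dirac' {f : ℝ → ℝ} (hf : StronglyMeasurable f) (a : ℝ) :
    Integrable f (Measure.dirac a) := by
  refine ⟨hf.aestronglyMeasurable, ?_⟩
  rw [HasFiniteIntegral, lintegral_dirac' a hf.measurable.enorm]
  exact enorm_lt_top

lemma integral_bern {q : ℝ} (h0 : 0 ≤ q) (h1 : q ≤ 1) {f : ℝ → ℝ} (hf : StronglyMeasurable f) :
    ∫ x, f x ∂(ENNReal.ofReal (1-q) • Measure.dirac (0:ℝ) + ENNReal.ofReal q • Measure.dirac (1:ℝ))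
      = (1-q) * f 0 + q * f 1 := by
  have hi : ∀ a : ℝ, ∀ c : ENNReal, c ≠ ⊤ → Integrable f (c • Measure.dirac a) :=
    fun a c hc => (integrable_dirac' hf a).smul_measure hc
  rw [integral_add_measure (hi _ _ ENNReal.ofReal_ne_top) (hi _ _ ENNReal.ofReal_ne_top),
    integral_smul_measure, integral_smul_measure, integral_dirac, integral_dirac,
    ENNReal.toReal_ofReal (by linarith), ENNReal.toReal_ofReal h0]
  simp [smul_eq_mul]




lemma ols_eq (x y : ℕ → ℝ) (hxx : ∀ i, x i * x i = x i) {n : ℕ} (hn : 1 ≤ n) :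
    (∑ i ∈ Finset.range n, (x i - (∑ j ∈ Finset.range n, x j)/(n:ℝ)) *
        (y i - (∑ j ∈ Finset.range n, y j)/(n:ℝ))) /
      (∑ i ∈ Finset.range n, (x i - (∑ j ∈ Finset.range n, x j)/(n:ℝ))^2)
    = ((∑ i ∈ Finset.range n, x i * y i)/(n:ℝ) -
        ((∑ i ∈ Finset.range n, x i)/(n:ℝ)) * ((∑ i ∈ Finset.range n, y i)/(n:ℝ))) /
      ((∑ i ∈ Finset.range n, x i)/(n:ℝ) -
        ((∑ i ∈ Finset.range n, x i)/(n:ℝ)) * ((∑ i ∈ Finset.range n, x i)/(n:ℝ))) := by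
  have hn' : (n:ℝ) ≠ 0 := Nat.cast_ne_zero.mpr (by omega)
  set Sx := ∑ j ∈ Finset.range n, x j with hSx
  set Sy := ∑ j ∈ Finset.range n, y j with hSy
  set Sz := ∑ j ∈ Finset.range n, x j * y j with hSz
  have e1 : ∑ i ∈ Finset.range n, (x i - Sx/(n:ℝ)) * (y i - Sy/(n:ℝ))
      = Sz - Sx * Sy / n := by
    have expand : ∀ i, (x i - Sx/(n:ℝ)) * (y i - Sy/(n:ℝ))
        = x i * y i - (Sy/(n:ℝ)) * x i - (Sx/(n:ℝ)) * y i + (Sx/(n:ℝ)) * (Sy/(n:ℝ)) :=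
      fun i => by ring
    simp_rw [expand, Finset.sum_add_distrib, Finset.sum_sub_distrib, ← Finset.mul_sum,
      Finset.sum_const, Finset.card_range, nsmul_eq_mul, ← hSx, ← hSy, ← hSz]
    field_simp
    ring
  have e2 : ∑ i ∈ Finset.range n, (x i - Sx/(n:ℝ))^2 = Sx - Sx * Sx / n := by
    have expand : ∀ i, (x i - Sx/(n:ℝ))^2
        = x i - 2 * (Sx/(n:ℝ)) * x i + (Sx/(n:ℝ)) * (Sx/(n:ℝ)) := by
      intro i
      have : (x i - Sx/(n:ℝ))^2
          = x i * x i - 2 * (Sx/(n:ℝ)) * x i + (Sx/(n:ℝ)) * (Sx/(n:ℝ)) := by ring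
      rw [this, hxx i]
    simp_rw [expand, Finset.sum_add_distrib, Finset.sum_sub_distrib, ← Finset.mul_sum,
      Finset.sum_const, Finset.card_range, nsmul_eq_mul, ← hSx]
    field_simp
    ring
  rw [e1, e2]
  have n1 : Sz - Sx * Sy / n = (n:ℝ) * (Sz/(n:ℝ) - (Sx/(n:ℝ)) * (Sy/(n:ℝ))) := by
    field_simp
  have n2 : Sx - Sx * Sx / n = (n:ℝ) * (Sx/(n:ℝ) - (Sx/(n:ℝ)) * (Sx/(n:ℝ))) := by
    field_simp
  rw [n1, n2, mul_div_mul_left _ _ hn']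


/-- In the Gaussian thresholding model mᵢ = β₀ᵐ + β₁ᵐpᵢ + εᵢ, gᵢ = β₀ᵍ + β₁ᵍpᵢ + τᵢ,
with pᵢ ~ Bernoulli(π) and εᵢ, τᵢ ~ N(0,1) all mutually independent (i.i.d. across
cells), the OLS thresholding estimator (slope of mᵢ on p̂ᵢ = 𝟙(gᵢ ≥ c), with
intercept) converges almost surely to β₁ᵐ·γ, where
γ = π(ω − E[p̂])/(E[p̂](1 − E[p̂])), E[p̂] = ζ(1−π) + ωπ, ω = Φ(β₁ᵍ + β₀ᵍ − c),
ζ = Φ(β₀ᵍ − c). -/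
theorem stmt_0 {Ω : Type*} [MeasurableSpace Ω] (μ : Measure Ω) [IsProbabilityMeasure μ]
    (p ε τ : ℕ → Ω → ℝ) (β0m β1m β0g β1g c π : ℝ) (hπ : π ∈ Set.Ioo (0:ℝ) 1)
    (hmp : ∀ i, Measurable (p i)) (hme : ∀ i, Measurable (ε i)) (hmt : ∀ i, Measurable (τ i))
    (hp : ∀ i, μ.map (p i) =
      ENNReal.ofReal (1 - π) • Measure.dirac (0:ℝ) + ENNReal.ofReal π • Measure.dirac (1:ℝ))
    (he : ∀ i, μ.map (ε i) = gaussianReal 0 1)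
    (ht : ∀ i, μ.map (τ i) = gaussianReal 0 1)
    (hindep : iIndepFun
      (fun ik : ℕ × Fin 3 => ![p ik.1, ε ik.1, τ ik.1] ik.2) μ) :
    ∀ᵐ ω ∂μ,
      Tendsto (fun n : ℕ =>
        (∑ i ∈ Finset.range n,
            ((if c ≤ β0g + β1g * p i ω + τ i ω then (1:ℝ) else 0) -
              (∑ j ∈ Finset.range n,
                (if c ≤ β0g + β1g * p j ω + τ j ω then (1:ℝ) else 0)) / (n:ℝ)) *
            ((β0m + β1m * p i ω + ε i ω) -
              (∑ j ∈ Finset.range n, (β0m + β1m * p j ω + ε j ω)) / (n:ℝ))) /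
          (∑ i ∈ Finset.range n,
            ((if c ≤ β0g + β1g * p i ω + τ i ω then (1:ℝ) else 0) -
              (∑ j ∈ Finset.range n,
                (if c ≤ β0g + β1g * p j ω + τ j ω then (1:ℝ) else 0)) / (n:ℝ)) ^ 2))
        atTop
        (nhds (β1m *
          (π * (Phi (β1g + β0g - c) -
              (Phi (β0g - c) * (1 - π) + Phi (β1g + β0g - c) * π)) /
            ((Phi (β0g - c) * (1 - π) + Phi (β1g + β0g - c) * π) *
              (1 - (Phi (β0g - c) * (1 - π) + Phi (β1g + β0g - c) * π)))))) := by
  classical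
  obtain ⟨hπ0, hπ1⟩ := hπ
  set N : Measure ℝ := gaussianReal 0 1 with hN
  set B : Measure ℝ := ENNReal.ofReal (1 - π) • Measure.dirac (0:ℝ)
      + ENNReal.ofReal π • Measure.dirac (1:ℝ) with hB
  haveI hBprob : IsProbabilityMeasure B := by
    constructor
    rw [hB]
    simp only [Measure.add_apply, Measure.smul_apply, measure_univ, smul_eq_mul, mul_one]
    rw [← ENNReal.ofReal_add (by linarith) (by linarith)]
    norm_num
  set ρ : Measure (ℝ × ℝ) := N.prod N with hρ
  set ν : Measure (ℝ × ℝ × ℝ) := B.prod ρ with hν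
  set f : (ik : ℕ × Fin 3) → Ω → ℝ := fun ik => ![p ik.1, ε ik.1, τ ik.1] ik.2 with hf
  have hfm : ∀ ik, Measurable (f ik) := by
    rintro ⟨i, k⟩
    fin_cases k
    · exact hmp i
    · exact hme i
    · exact hmt i
  set T : ℕ → Ω → ℝ × ℝ × ℝ := fun i ω => (p i ω, ε i ω, τ i ω) with hT
  have hTm : ∀ i, Measurable (T i) := fun i =>
    (hmp i).prodMk ((hme i).prodMk (hmt i))
  -- identical distribution of the triples
  have hmapT : ∀ i, μ.map (T i) = ν := by
    intro i
    have h23 : IndepFun (ε i) (τ i) μ :=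
      hindep.indepFun (show ((i,1) : ℕ × Fin 3) ≠ (i,2) by simp)
    have hpair : μ.map (fun ω => (ε i ω, τ i ω)) = ρ := by
      have := (indepFun_iff_map_prod_eq_prod_map_map (hme i).aemeasurable
        (hmt i).aemeasurable).mp h23
      rw [he i, ht i] at this
      exact this
    have h123 : IndepFun (p i) (fun ω => (ε i ω, τ i ω)) μ :=
      (hindep.indepFun_prodMk hfm (i,1) (i,2) (i,0) (by simp) (by simp)).symm
    have := (indepFun_iff_map_prod_eq_prod_map_map (hmp i).aemeasurable
      ((hme i).prodMk (hmt i)).aemeasurable).mp h123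
    rw [hν, ← hp i, ← hpair]
    exact this
  -- pairwise independence of the triples
  have hTindep : ∀ i j, i ≠ j → IndepFun (T i) (T j) μ := by
    intro i j hij
    let S : ℕ → Finset (ℕ × Fin 3) := fun i => {(i,0), (i,1), (i,2)}
    have hdisj : Disjoint (S i) (S j) := by
      simp only [S, Finset.disjoint_left, Finset.mem_insert, Finset.mem_singleton]
      rintro ⟨a, b⟩ ha hb
      rcases ha with h | h | h <;> rcases hb with h' | h' | h' <;>
        exact hij ((congrArg Prod.fst h).symm.trans (congrArg Prod.fst h'))
    have base := hindep.indepFun_finset (S i) (S j) hdisj hfm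
    let g : (k : ℕ) → ((l : S k) → ℝ) → ℝ × ℝ × ℝ := fun k v =>
      (v ⟨(k,0), by simp [S]⟩, v ⟨(k,1), by simp [S]⟩, v ⟨(k,2), by simp [S]⟩)
    have hg : ∀ k, Measurable (g k) := fun k =>
      (measurable_pi_apply _).prodMk ((measurable_pi_apply _).prodMk (measurable_pi_apply _))
    exact base.comp (hg i) (hg j)
  -- generic SLLN for functions of the triple
  have key : ∀ (F : ℝ × ℝ × ℝ → ℝ), Measurable F → Integrable F ν →
      ∀ᵐ ω ∂μ, Tendsto (fun n : ℕ => (∑ i ∈ Finset.range n, F (T i ω))/(n:ℝ)) atTop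
        (nhds (∫ x, F x ∂ν)) := by
    intro F hFm hFi
    have hint : Integrable (fun ω => F (T 0 ω)) μ :=
      (integrable_map_measure (f := T 0) (g := F)
        (by rw [hmapT 0]; exact hFm.aestronglyMeasurable) (hTm 0).aemeasurable).mp
        (by rw [hmapT 0]; exact hFi)
    have hind : Pairwise (Function.onFun (IndepFun · · μ) (fun i ω => F (T i ω))) :=
      fun i j hij => (hTindep i j hij).comp hFm hFm
    have hid : ∀ i, IdentDistrib (fun ω => F (T i ω)) (fun ω => F (T 0 ω)) μ μ := fun i =>
      ⟨(hFm.comp (hTm i)).aemeasurable, (hFm.comp (hTm 0)).aemeasurable, by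
        rw [show (fun ω => F (T i ω)) = F ∘ T i from rfl,
          show (fun ω => F (T 0 ω)) = F ∘ T 0 from rfl,
          ← Measure.map_map hFm (hTm i), ← Measure.map_map hFm (hTm 0), hmapT i, hmapT 0]⟩
    have h := strong_law_ae_real _ hint hind hid
    have heq : (μ[fun ω => F (T 0 ω)]) = ∫ x, F x ∂ν := by
      rw [← hmapT 0, integral_map (hTm 0).aemeasurable
        (by rw [hmapT 0]; exact hFm.aestronglyMeasurable)]
    rw [heq] at h
    exact h
  -- the three functions
  set FX : ℝ × ℝ × ℝ → ℝ := fun x => if c ≤ β0g + β1g * x.1 + x.2.2 then 1 else 0 with hFX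
  set FY : ℝ × ℝ × ℝ → ℝ := fun x => β0m + β1m * x.1 + x.2.1 with hFY
  set FZ : ℝ × ℝ × ℝ → ℝ := fun x => FX x * FY x with hFZ
  have hFXm : Measurable FX := by
    refine Measurable.ite ?_ measurable_const measurable_const
    exact measurableSet_le measurable_const (by fun_prop)
  have hFYm : Measurable FY := by fun_prop
  have hFZm : Measurable FZ := hFXm.mul hFYm
  have hFXb : ∀ x, ‖FX x‖ ≤ 1 := by
    intro x
    rw [hFX]
    dsimp only
    split <;> simp
  have hIX : Integrable FX ν :=
    (integrable_const 1).mono' hFXm.aestronglyMeasurable (ae_of_all _ hFXb)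
  have hae1 : ∀ᵐ x ∂ν, x.1 = 0 ∨ x.1 = 1 := by
    have hset : {x : ℝ × ℝ × ℝ | ¬(x.1 = 0 ∨ x.1 = 1)} = ({0,1}ᶜ : Set ℝ) ×ˢ Set.univ := by
      ext x
      simp [Set.mem_prod]
    rw [ae_iff, hset, hν, Measure.prod_prod]
    have : B ({0,1}ᶜ : Set ℝ) = 0 := by
      rw [hB]
      have hms : MeasurableSet (({0,1}ᶜ : Set ℝ)) := (Set.Finite.measurableSet (Set.toFinite _)).compl
      simp only [Measure.add_apply, Measure.smul_apply, smul_eq_mul]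
      rw [Measure.dirac_apply' _ hms, Measure.dirac_apply' _ hms]
      simp
    rw [this, zero_mul]
  have hIY : Integrable FY ν := by
    have hI1 : Integrable (fun x : ℝ × ℝ × ℝ => β0m + β1m * x.1) ν := by
      refine (integrable_const (|β0m| + |β1m|)).mono'
        ((measurable_const.add (measurable_fst.const_mul β1m)).aestronglyMeasurable) ?_
      filter_upwards [hae1] with x hx
      rcases hx with h | h <;> rw [h] <;>
        simp [abs_le] <;> constructor <;>
        cases abs_cases β0m <;> cases abs_cases β1m <;> linarith
    have hmap21 : ν.map (fun x : ℝ × ℝ × ℝ => x.2.1) = N := by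
      rw [show (fun x : ℝ × ℝ × ℝ => x.2.1) = Prod.fst ∘ Prod.snd from rfl,
        ← Measure.map_map measurable_fst measurable_snd, hν, Measure.map_snd_prod,
        measure_univ, one_smul, hρ, Measure.map_fst_prod, measure_univ, one_smul]
    have hI2 : Integrable (fun x : ℝ × ℝ × ℝ => x.2.1) ν := by
      have := (integrable_map_measure (f := fun x : ℝ × ℝ × ℝ => x.2.1) (g := fun x : ℝ => x)
        (by rw [hmap21]; exact measurable_id.aestronglyMeasurable)
        (by fun_prop)).mp (by rw [hmap21]; exact integrable_id_gauss)
      exact this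
    have := hI1.add hI2
    exact this
  have hIZ : Integrable FZ ν := by
    refine hIY.abs.mono' hFZm.aestronglyMeasurable (ae_of_all _ fun x => ?_)
    rw [hFZ]
    dsimp only
    rw [norm_mul]
    calc ‖FX x‖ * ‖FY x‖ ≤ 1 * ‖FY x‖ := by
          apply mul_le_mul_of_nonneg_right (hFXb x) (norm_nonneg _)
    _ = |FY x| := by rw [one_mul, Real.norm_eq_abs]
  -- inner integrals over ρ
  have hind_int : ∀ a : ℝ, ∫ y : ℝ × ℝ, (if c ≤ β0g + β1g * a + y.2 then (1:ℝ) else 0) ∂ρ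
      = Phi (β0g + β1g * a - c) := by
    intro a
    calc ∫ y : ℝ × ℝ, (if c ≤ β0g + β1g * a + y.2 then (1:ℝ) else 0) ∂ρ
        = ∫ y : ℝ × ℝ, (fun _ : ℝ => (1:ℝ)) y.1 *
            (fun t : ℝ => if (c - β0g - β1g * a) ≤ t then (1:ℝ) else 0) y.2 ∂(N.prod N) := by
          rw [hρ]
          refine integral_congr_ae (ae_of_all _ fun y => ?_)
          dsimp only
          rw [one_mul]
          exact if_congr (by constructor <;> intro <;> linarith) rfl rfl
    _ = (∫ _x : ℝ, (1:ℝ) ∂N) * ∫ t, (if (c - β0g - β1g * a) ≤ t then (1:ℝ) else 0) ∂N :=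
          integral_prod_mul (fun _ : ℝ => (1:ℝ))
            (fun t : ℝ => if (c - β0g - β1g * a) ≤ t then (1:ℝ) else 0)
    _ = Phi (β0g + β1g * a - c) := by
          rw [hN, integral_indicator_gauss, integral_const]
          simp only [measure_univ, probReal_univ, ENNReal.toReal_one, smul_eq_mul, mul_one, one_mul]
          congr 1
          ring
  have hlin_int : ∀ a : ℝ, ∫ y : ℝ × ℝ, (β0m + β1m * a + y.1) ∂ρ = β0m + β1m * a := by
    intro a
    calc ∫ y : ℝ × ℝ, (β0m + β1m * a + y.1) ∂ρ
        = ∫ y : ℝ × ℝ, (fun b : ℝ => β0m + β1m * a + b) y.1 *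
            (fun _ : ℝ => (1:ℝ)) y.2 ∂(N.prod N) := by
          rw [hρ]
          exact integral_congr_ae (ae_of_all _ fun y => by dsimp only; rw [mul_one])
    _ = (∫ b : ℝ, (β0m + β1m * a + b) ∂N) * ∫ _t : ℝ, (1:ℝ) ∂N :=
          integral_prod_mul (fun b : ℝ => β0m + β1m * a + b) (fun _ : ℝ => (1:ℝ))
    _ = β0m + β1m * a := by
          rw [hN, integral_add (integrable_const _) integrable_id_gauss, integral_const,
            integral_id_gauss, integral_const]
          simp [measure_univ]
  have hmix_int : ∀ a : ℝ,
      ∫ y : ℝ × ℝ, (if c ≤ β0g + β1g * a + y.2 then (1:ℝ) else 0) * (β0m + β1m * a + y.1) ∂ρ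
      = (β0m + β1m * a) * Phi (β0g + β1g * a - c) := by
    intro a
    calc ∫ y : ℝ × ℝ, (if c ≤ β0g + β1g * a + y.2 then (1:ℝ) else 0) * (β0m + β1m * a + y.1) ∂ρ
        = ∫ y : ℝ × ℝ, (fun b : ℝ => β0m + β1m * a + b) y.1 *
            (fun t : ℝ => if (c - β0g - β1g * a) ≤ t then (1:ℝ) else 0) y.2 ∂(N.prod N) := by
          rw [hρ]
          refine integral_congr_ae (ae_of_all _ fun y => ?_)
          dsimp only
          rw [mul_comm]
          congr 1
          exact if_congr (by constructor <;> intro <;> linarith) rfl rfl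
    _ = (∫ b : ℝ, (β0m + β1m * a + b) ∂N) *
          ∫ t, (if (c - β0g - β1g * a) ≤ t then (1:ℝ) else 0) ∂N :=
          integral_prod_mul (fun b : ℝ => β0m + β1m * a + b)
            (fun t : ℝ => if (c - β0g - β1g * a) ≤ t then (1:ℝ) else 0)
    _ = (β0m + β1m * a) * Phi (β0g + β1g * a - c) := by
          rw [hN, integral_indicator_gauss,
            integral_add (integrable_const _) integrable_id_gauss, integral_const,
            integral_id_gauss]
          simp only [measure_univ, probReal_univ, ENNReal.toReal_one, smul_eq_mul, mul_one, one_mul, add_zero]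
          congr 2
          ring
  -- the three expectations
  have hEX : ∫ x, FX x ∂ν = (1-π) * Phi (β0g - c) + π * Phi (β1g + β0g - c) := by
    calc ∫ x, FX x ∂ν = ∫ a, ∫ y, FX (a, y) ∂ρ ∂B := by
          rw [hν]; exact integral_prod _ (by rw [← hν]; exact hIX)
    _ = ∫ a, Phi (β0g + β1g * a - c) ∂B :=
          integral_congr_ae (ae_of_all _ fun a => hind_int a)
    _ = (1-π) * Phi (β0g + β1g * 0 - c) + π * Phi (β0g + β1g * 1 - c) := by
          rw [hB]
          exact integral_bern hπ0.le hπ1.le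
            (Phi_mono.measurable.comp (by fun_prop)).stronglyMeasurable
    _ = (1-π) * Phi (β0g - c) + π * Phi (β1g + β0g - c) := by
          rw [show β0g + β1g * 0 - c = β0g - c by ring, show β0g + β1g * 1 - c = β1g + β0g - c by ring]
  have hEY : ∫ x, FY x ∂ν = (1-π) * β0m + π * (β0m + β1m) := by
    calc ∫ x, FY x ∂ν = ∫ a, ∫ y, FY (a, y) ∂ρ ∂B := by
          rw [hν]; exact integral_prod _ (by rw [← hν]; exact hIY)
    _ = ∫ a, (β0m + β1m * a) ∂B :=
          integral_congr_ae (ae_of_all _ fun a => hlin_int a)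
    _ = (1-π) * (β0m + β1m * 0) + π * (β0m + β1m * 1) := by
          rw [hB]
          exact integral_bern hπ0.le hπ1.le
            (measurable_const.add (measurable_id.const_mul β1m)).stronglyMeasurable
    _ = (1-π) * β0m + π * (β0m + β1m) := by ring
  have hEZ : ∫ x, FZ x ∂ν
      = (1-π) * (β0m * Phi (β0g - c)) + π * ((β0m + β1m) * Phi (β1g + β0g - c)) := by
    calc ∫ x, FZ x ∂ν = ∫ a, ∫ y, FZ (a, y) ∂ρ ∂B := by
          rw [hν]; exact integral_prod _ (by rw [← hν]; exact hIZ)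
    _ = ∫ a, (β0m + β1m * a) * Phi (β0g + β1g * a - c) ∂B :=
          integral_congr_ae (ae_of_all _ fun a => hmix_int a)
    _ = (1-π) * ((β0m + β1m * 0) * Phi (β0g + β1g * 0 - c))
          + π * ((β0m + β1m * 1) * Phi (β0g + β1g * 1 - c)) := by
          rw [hB]
          refine integral_bern hπ0.le hπ1.le ?_
          exact ((measurable_const.add (measurable_id.const_mul β1m)).mul
            (Phi_mono.measurable.comp (by fun_prop))).stronglyMeasurable
    _ = (1-π) * (β0m * Phi (β0g - c)) + π * ((β0m + β1m) * Phi (β1g + β0g - c)) := by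
          rw [show β0g + β1g * 0 - c = β0g - c by ring,
            show β0g + β1g * 1 - c = β1g + β0g - c by ring]
          ring
  have hXas := key FX hFXm hIX
  have hYas := key FY hFYm hIY
  have hZas := key FZ hFZm hIZ
  rw [hEX] at hXas
  rw [hEY] at hYas
  rw [hEZ] at hZas
  have hζ0 := Phi_pos (β0g - c)
  have hζ1 := Phi_lt_one (β0g - c)
  have hw0 := Phi_pos (β1g + β0g - c)
  have hw1 := Phi_lt_one (β1g + β0g - c)
  set ζ := Phi (β0g - c) with hζ
  set w := Phi (β1g + β0g - c) with hw
  have hq0 : 0 < (1-π) * ζ + π * w :=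
    add_pos (mul_pos (by linarith) hζ0) (mul_pos hπ0 hw0)
  have hq1 : (1-π) * ζ + π * w < 1 := by nlinarith
  filter_upwards [hXas, hYas, hZas] with ω hx hy hz
  set EXv := (1-π) * ζ + π * w with hEXv
  have hEXv' : (1-π) * Phi (β0g - c) + π * Phi (β1g + β0g - c) = EXv := rfl
  set EYv := (1-π) * β0m + π * (β0m + β1m) with hEYv
  set EZv := (1-π) * (β0m * ζ) + π * ((β0m + β1m) * w) with hEZv
  have hden : EXv - EXv * EXv ≠ 0 := by
    have : 0 < EXv * (1 - EXv) := mul_pos hq0 (by linarith)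
    intro h
    apply this.ne'
    rw [← h]; ring
  have hlim : Tendsto (fun n : ℕ =>
      ((∑ i ∈ Finset.range n, FZ (T i ω))/(n:ℝ) -
        ((∑ i ∈ Finset.range n, FX (T i ω))/(n:ℝ)) *
        ((∑ i ∈ Finset.range n, FY (T i ω))/(n:ℝ))) /
      ((∑ i ∈ Finset.range n, FX (T i ω))/(n:ℝ) -
        ((∑ i ∈ Finset.range n, FX (T i ω))/(n:ℝ)) *
        ((∑ i ∈ Finset.range n, FX (T i ω))/(n:ℝ)))) atTop
      (nhds ((EZv - EXv * EYv) / (EXv - EXv * EXv))) :=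
    Tendsto.div (hz.sub (hx.mul hy)) (hx.sub (hx.mul hx)) hden
  have htarget : (EZv - EXv * EYv) / (EXv - EXv * EXv)
      = β1m * (π * (w - (ζ * (1 - π) + w * π)) /
          ((ζ * (1 - π) + w * π) * (1 - (ζ * (1 - π) + w * π)))) := by
    have hne2 : (0:ℝ) < 1 - ((1-π) * ζ + π * w) := by linarith
    have hqe : ζ * (1 - π) + w * π = (1-π) * ζ + π * w := by ring
    rw [hqe, hEXv, hEYv, hEZv]
    field_simp [hq0.ne', hne2.ne']
    ring
  rw [← htarget]
  refine Tendsto.congr' ?_ hlim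
  filter_upwards [eventually_ge_atTop 1] with n hn
  have hxx : ∀ i : ℕ, (fun i : ℕ => if c ≤ β0g + β1g * p i ω + τ i ω then (1:ℝ) else 0) i *
      (fun i : ℕ => if c ≤ β0g + β1g * p i ω + τ i ω then (1:ℝ) else 0) i
      = (fun i : ℕ => if c ≤ β0g + β1g * p i ω + τ i ω then (1:ℝ) else 0) i := by
    intro i
    dsimp only
    split <;> norm_num
  exact (ols_eq (fun i : ℕ => if c ≤ β0g + β1g * p i ω + τ i ω then (1:ℝ) else 0)
    (fun i : ℕ => β0m + β1m * p i ω + ε i ω) hxx hn).symm
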